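/- Let f : ℂ^{n×n} → ℂ^{n×n} be admissible. Then f preserves conjugate transposes: f(A^H) = f(A)^H for every matrix A ∈ ℂ^{n×n}. -/

import Mathlib

open Matrix Filter Topology
open scoped ComplexOrder

noncomputable section

/-- Square complex matrices of size `n`. -/
abbrev Mat (n : ℕ) := Matrix (Fin n) (Fin n) ℂ

/-- An operator `f` on complex `n × n` matrices is *admissible* if it satisfies
(a1) `f (f X) = X`, (a2) additivity, (a3) multiplicativity, and
(a4) `f X` is positive semidefinite whenever `X` is. -/
def Admissible {n : ℕ} (f : Mat n → Mat n) : Prop :=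
  (∀ X, f (f X) = X) ∧
  (∀ X Y, f (X + Y) = f X + f Y) ∧
  (∀ X Y, f (X * Y) = f X * f Y) ∧
  (∀ X, X.PosSemidef → (f X).PosSemidef)

/-- an admissible operator preserves conjugate transposes. -/
theorem stmt_1 {n : ℕ} (f : Mat n → Mat n) (hf : Admissible f) (A : Mat n) :
    f Aᴴ = (f A)ᴴ := by
  obtain ⟨h1, h2, h3, h4⟩ := hf
  rcases Nat.eq_zero_or_pos n with hn | hn
  · subst hn; exact Subsingleton.elim _ _
  have hf0 : f 0 = 0 := by
    have := h2 0 0; simpa using this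
  have hsub : ∀ X Y : Mat n, f (X - Y) = f X - f Y := by
    intro X Y
    have := h2 (X - Y) Y
    rw [sub_add_cancel] at this
    rw [this]; abel
  have hsurj : Function.Surjective f := fun Y => ⟨f Y, h1 Y⟩
  have hfI : f 1 = 1 := by
    have := h3 1 (f 1)
    simp only [one_mul, h1, mul_one] at this
    exact this.symm
  -- two-cancel
  have htwo : ∀ M N : Mat n, M + M = N + N → M = N := by
    intro M N h
    have h2' : (2 : ℂ) • M = (2 : ℂ) • N := by
      rw [two_smul, two_smul]; exact h
    exact smul_right_injective (Mat n) two_ne_zero h2'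
  -- Hermitian preservation
  have hherm : ∀ X : Mat n, X.IsHermitian → (f X).IsHermitian := by
    intro X hX
    have key : X + X = (X + 1)ᴴ * (X + 1) - (Xᴴ * X + 1) := by
      simp only [conjTranspose_add, conjTranspose_one, hX.eq]
      noncomm_ring
    have hP : ((X + 1)ᴴ * (X + 1)).PosSemidef := posSemidef_conjTranspose_mul_self _
    have hQ : (Xᴴ * X + 1).PosSemidef :=
      (posSemidef_conjTranspose_mul_self X).add Matrix.PosSemidef.one
    have hsum : f X + f X = f ((X + 1)ᴴ * (X + 1)) - f (Xᴴ * X + 1) := by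
      rw [← h2, key, hsub]
    have hH : (f X + f X).IsHermitian := by
      rw [hsum]
      exact ((h4 _ hP).isHermitian).sub ((h4 _ hQ).isHermitian)
    have : (f X)ᴴ + (f X)ᴴ = f X + f X := by
      have := hH.eq
      rwa [conjTranspose_add] at this
    exact htwo _ _ this
  -- J := f (i • 1)
  set J := f (Complex.I • 1) with hJdef
  have hJsq : J * J = -1 := by
    have hm : (Complex.I • (1 : Mat n)) * (Complex.I • 1) = -1 := by
      rw [smul_mul_smul_comm, one_mul, Complex.I_mul_I, neg_smul, one_smul]
    have := h3 (Complex.I • (1 : Mat n)) (Complex.I • 1)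
    rw [hm] at this
    have hneg : f (-1 : Mat n) = -1 := by
      have := hsub 0 1
      rw [hf0, hfI] at this
      simpa using this
    rw [hneg] at this
    exact this.symm
  have hcomm : ∀ Y : Mat n, J * Y = Y * J := by
    intro Y
    obtain ⟨X, rfl⟩ := hsurj Y
    rw [hJdef, ← h3, ← h3]
    congr 1
    rw [smul_mul_assoc, one_mul, mul_smul_comm, mul_one]
  obtain ⟨c, hc⟩ : J ∈ Set.range (Matrix.scalar (Fin n)) := by
    rw [mem_range_scalar_iff_commute_single']
    intro i j
    exact (hcomm _).symm
  have hcI : J = c • 1 := by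
    rw [← hc, scalar_apply]
    ext i j
    simp [Matrix.diagonal_apply, Matrix.one_apply]
  have hc2 : c * c = -1 := by
    have i0 : Fin n := ⟨0, hn⟩
    have h := hJsq
    rw [hcI, smul_mul_smul_comm, one_mul] at h
    have := congrFun (congrFun h i0) i0
    simpa using this
  have hstar : star c = -c := by
    have : (c - Complex.I) * (c + Complex.I) = 0 := by
      have : c * c + 1 = 0 := by rw [hc2]; ring
      linear_combination this - Complex.I_sq
    rcases mul_eq_zero.1 this with h | h
    · have hc' : c = Complex.I := sub_eq_zero.1 h
      simp [hc', Complex.star_def, Complex.conj_I]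
    · have hc' : c = -Complex.I := by
        have := eq_neg_of_add_eq_zero_left h
        exact this
      simp [hc', Complex.star_def]
  have hJH : Jᴴ = -J := by
    rw [hcI, conjTranspose_smul, conjTranspose_one, hstar, neg_smul]
  -- decomposition
  set S := A + Aᴴ with hSdef
  set T := (-Complex.I) • (A - Aᴴ) with hTdef
  have hS : S.IsHermitian := by
    rw [hSdef, Matrix.IsHermitian]
    rw [conjTranspose_add, conjTranspose_conjTranspose]; abel
  have hT : T.IsHermitian := by
    rw [hTdef, Matrix.IsHermitian, conjTranspose_smul, conjTranspose_sub,
      conjTranspose_conjTranspose]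
    simp only [star_neg, Complex.star_def, Complex.conj_I, neg_neg]
    rw [show Aᴴ - A = -(A - Aᴴ) by abel, smul_neg, ← neg_smul]
  have hiT : (Complex.I • (1 : Mat n)) * T = A - Aᴴ := by
    rw [smul_mul_assoc, one_mul, hTdef, smul_smul]
    simp [Complex.I_mul_I]
  have hA2 : A + A = S + (Complex.I • 1) * T := by
    rw [hiT, hSdef]; abel
  have hAH2 : Aᴴ + Aᴴ = S - (Complex.I • 1) * T := by
    rw [hiT, hSdef]; abel
  have hfA : f A + f A = f S + J * f T := by
    rw [← h2, hA2, h2, h3, ← hJdef]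
  have hfAH : f Aᴴ + f Aᴴ = f S - J * f T := by
    rw [← h2, hAH2, hsub, h3, ← hJdef]
  have hfAT : (f A)ᴴ + (f A)ᴴ = f S - J * f T := by
    have : ((f A) + (f A))ᴴ = (f S + J * f T)ᴴ := by rw [hfA]
    rw [conjTranspose_add, conjTranspose_add, conjTranspose_mul, hJH,
      (hherm S hS).eq, (hherm T hT).eq] at this
    rw [this, mul_neg, ← hcomm (f T)]
    abel
  exact htwo _ _ (hfAH.trans hfAT.symm)
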